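/- If a nested-sequent Γ ⇒ Δ, T is not provable in NSMB, then Γ ⇒ Δ, T is false in the canonical model (S_C, R_C, P_C, V_C) under the canonical embedding E_C. -/

import Mathlib

set_option maxHeartbeats 1000000

namespace MBQL

/-- The fixed finite set `J ⊆ [0,1]` of inner-product values, with `0, 1 ∈ J`. -/
structure MBParams where
  J : Set ℝ
  finite : J.Finite
  subI : J ⊆ Set.Icc (0:ℝ) 1
  zero_mem : (0:ℝ) ∈ J
  one_mem : (1:ℝ) ∈ J

/-- Formulas of **MB**: `A ::= p | ⊤ | ⊥ | ¬A | A∧A | □^c_α A | □^o_α A` (α ∈ J). -/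
inductive MBForm (Pm : MBParams) : Type
  | var : ℕ → MBForm Pm
  | top : MBForm Pm
  | bot : MBForm Pm
  | neg : MBForm Pm → MBForm Pm
  | conj : MBForm Pm → MBForm Pm → MBForm Pm
  | boxc : Pm.J → MBForm Pm → MBForm Pm
  | boxo : Pm.J → MBForm Pm → MBForm Pm

noncomputable instance {Pm : MBParams} : DecidableEq (MBForm Pm) := Classical.decEq _

/-- Valuation of a formula, given worlds `S`, a relation `R : S → S → ℝ` and a
valuation `V` of the propositional variables. -/
def MBForm.valR {Pm : MBParams} {S : Type} (R : S → S → ℝ) (V : ℕ → Set S) :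
    MBForm Pm → Set S
  | .var n => V n
  | .top => Set.univ
  | .bot => ∅
  | .neg A => (A.valR R V)ᶜ
  | .conj A B => A.valR R V ∩ B.valR R V
  | .boxc α A => {s | ∀ t, (α : ℝ) ≤ R s t → t ∈ A.valR R V}
  | .boxo α A => {s | ∀ t, (α : ℝ) < R s t → t ∈ A.valR R V}

/-- An EQL-frame. -/
structure EQLFrame where
  S : Type
  nonempty : Nonempty S
  R : S → S → ℝ
  mem_Icc : ∀ s t, R s t ∈ Set.Icc (0:ℝ) 1
  eq_one_iff : ∀ s t, (R s t = 1 ↔ s = t)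
  symm : ∀ s t, R s t = R t s

/-- An MB-realization. -/
structure MBRealization (Pm : MBParams) where
  F : EQLFrame
  P : Set (Set F.S)
  univ_mem : Set.univ ∈ P
  empty_mem : ∅ ∈ P
  inter_mem : ∀ X ∈ P, ∀ Y ∈ P, X ∩ Y ∈ P
  compl_mem : ∀ X ∈ P, Xᶜ ∈ P
  boxc_mem : ∀ α ∈ Pm.J, ∀ X ∈ P, {s | ∀ t, α ≤ F.R s t → t ∈ X} ∈ P
  boxo_mem : ∀ α ∈ Pm.J, ∀ X ∈ P, {s | ∀ t, α < F.R s t → t ∈ X} ∈ P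
  V : ℕ → Set F.S
  V_mem : ∀ n, V n ∈ P

/-- The extended valuation of a formula in an MB-realization. -/
def MBRealization.val {Pm : MBParams} (M : MBRealization Pm) (A : MBForm Pm) :
    Set M.F.S := A.valR M.F.R M.V

/-- Validity of an MB-formula. -/
def MBValid {Pm : MBParams} (A : MBForm Pm) : Prop :=
  ∀ (M : MBRealization Pm) (s : M.F.S), s ∈ M.val A

inductive Side : Type
  | c : Side
  | o : Side
deriving DecidableEq

/-- A label `(α, d)` on a modal bracket, with `α ∈ J − {1}`. -/
structure MBLab (Pm : MBParams) where
  α : ℝ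
  memJ : α ∈ Pm.J
  ne_one : α ≠ 1
  d : Side

mutual
/-- Nested-sequents: a finite tree whose nodes are sequents (pairs of finite
sets of formulas) and whose edges carry labels. -/
inductive NSeq (Pm : MBParams) : Type
  | node : Finset (MBForm Pm) → Finset (MBForm Pm) → NSeqs Pm → NSeq Pm
/-- A finite list of labelled child nested-sequents. -/
inductive NSeqs (Pm : MBParams) : Type
  | nil : NSeqs Pm
  | cons : MBLab Pm → NSeq Pm → NSeqs Pm → NSeqs Pm
end

/-- The `i`-th labelled child. -/
def NSeqs.get {Pm : MBParams} : NSeqs Pm → ℕ → Option (MBLab Pm × NSeq Pm)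
  | .nil, _ => none
  | .cons l t _, 0 => some (l, t)
  | .cons _ _ ts, n+1 => ts.get n

/-- `SubAt t p u`: the subtree of `t` at the path (node address) `p` is `u`. -/
inductive SubAt {Pm : MBParams} : NSeq Pm → List ℕ → NSeq Pm → Prop
  | here (t : NSeq Pm) : SubAt t [] t
  | there {Γ Δ : Finset (MBForm Pm)} {ts : NSeqs Pm} {i : ℕ} {l : MBLab Pm}
      {u v : NSeq Pm} {p : List ℕ} :
      NSeqs.get ts i = some (l, u) → SubAt u p v → SubAt (.node Γ Δ ts) (i :: p) v

/-- `p` is (the address of) a node of `t`. -/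
def IsNode {Pm : MBParams} (t : NSeq Pm) (p : List ℕ) : Prop := ∃ u, SubAt t p u

mutual
/-- Replace the sequent at the node with address `p` by `Γ' ⇒ Δ'`
(children are kept). -/
def NSeq.setSeq {Pm : MBParams} :
    NSeq Pm → List ℕ → Finset (MBForm Pm) → Finset (MBForm Pm) → NSeq Pm
  | .node _ _ ts, [], Γ', Δ' => .node Γ' Δ' ts
  | .node Γ Δ ts, i :: p, Γ', Δ' => .node Γ Δ (NSeqs.setSeqs ts i p Γ' Δ')
def NSeqs.setSeqs {Pm : MBParams} :
    NSeqs Pm → ℕ → List ℕ → Finset (MBForm Pm) → Finset (MBForm Pm) → NSeqs Pm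
  | .nil, _, _, _, _ => .nil
  | .cons l t ts, 0, p, Γ', Δ' => .cons l (t.setSeq p Γ' Δ') ts
  | .cons l t ts, n+1, p, Γ', Δ' => .cons l t (NSeqs.setSeqs ts n p Γ' Δ')
end

/-- Append a labelled child at the end of a children list. -/
def NSeqs.snoc {Pm : MBParams} : NSeqs Pm → MBLab Pm → NSeq Pm → NSeqs Pm
  | .nil, l, u => .cons l u .nil
  | .cons l' t ts, l, u => .cons l' t (ts.snoc l u)

mutual
/-- Add a new child `[u]_l` at the node with address `p`. -/
def NSeq.addChild {Pm : MBParams} : NSeq Pm → List ℕ → MBLab Pm → NSeq Pm → NSeq Pm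
  | .node Γ Δ ts, [], l, u => .node Γ Δ (ts.snoc l u)
  | .node Γ Δ ts, i :: p, l, u => .node Γ Δ (NSeqs.addChilds ts i p l u)
def NSeqs.addChilds {Pm : MBParams} : NSeqs Pm → ℕ → List ℕ → MBLab Pm → NSeq Pm → NSeqs Pm
  | .nil, _, _, _, _ => .nil
  | .cons l' t ts, 0, p, l, u => .cons l' (t.addChild p l u) ts
  | .cons l' t ts, n+1, p, l, u => .cons l' t (NSeqs.addChilds ts n p l u)
end


/-- Logical connectives defined by abbreviation: `A ∨ B`. -/
def MBForm.or {Pm : MBParams} (A B : MBForm Pm) : MBForm Pm := .neg (.conj (.neg A) (.neg B))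

/-- `A → B := ¬A ∨ B`. -/
def MBForm.imp {Pm : MBParams} (A B : MBForm Pm) : MBForm Pm := (MBForm.neg A).or B

/-- Conjunction of a list of formulas. -/
def conjList {Pm : MBParams} : List (MBForm Pm) → MBForm Pm
  | [] => .top
  | [A] => A
  | A :: B :: rest => .conj A (conjList (B :: rest))

/-- Disjunction of a list of formulas. -/
def disjList {Pm : MBParams} : List (MBForm Pm) → MBForm Pm
  | [] => .bot
  | [A] => A
  | A :: B :: rest => (A).or (disjList (B :: rest))

/-- `⋀Γ → ⋁Δ`. -/
noncomputable def seqForm {Pm : MBParams} (Γ Δ : Finset (MBForm Pm)) : MBForm Pm :=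
  (conjList Γ.toList).imp (disjList Δ.toList)

/-- The box corresponding to a bracket label. -/
def MBLab.box {Pm : MBParams} (l : MBLab Pm) (A : MBForm Pm) : MBForm Pm :=
  match l.d with
  | .c => .boxc ⟨l.α, l.memJ⟩ A
  | .o => .boxo ⟨l.α, l.memJ⟩ A

mutual
/-- The interpretation `τ` of a nested-sequent as a formula. -/
noncomputable def NSeq.tau {Pm : MBParams} : NSeq Pm → MBForm Pm
  | .node Γ Δ ts => NSeqs.tauAux (seqForm Γ Δ) ts
noncomputable def NSeqs.tauAux {Pm : MBParams} : MBForm Pm → NSeqs Pm → MBForm Pm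
  | A, .nil => A
  | A, .cons l t ts => NSeqs.tauAux (A.or (l.box t.tau)) ts
end

/-- `E` is an embedding of the nested-sequent `t` into the realization `M`
(`E` is given on node addresses). -/
def IsEmb {Pm : MBParams} (M : MBRealization Pm) (t : NSeq Pm)
    (E : List ℕ → M.F.S) : Prop :=
  ∀ p Γ Δ ts i l u, SubAt t p (.node Γ Δ ts) → NSeqs.get ts i = some (l, u) →
    (l.d = Side.c → l.α ≤ M.F.R (E p) (E (p ++ [i]))) ∧
    (l.d = Side.o → l.α < M.F.R (E p) (E (p ++ [i])))

/-- The nested-sequent `t` is false in `M` under `E`. -/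
def FalseUnder {Pm : MBParams} (M : MBRealization Pm) (t : NSeq Pm)
    (E : List ℕ → M.F.S) : Prop :=
  ∀ p Γ Δ ts, SubAt t p (.node Γ Δ ts) →
    (∀ A ∈ Γ, E p ∈ M.val A) ∧ (∀ A ∈ Δ, E p ∉ M.val A)

/-- Validity of a nested-sequent: it is not false under any embedding into
any MB-realization. -/
def NSValid {Pm : MBParams} (t : NSeq Pm) : Prop :=
  ∀ (M : MBRealization Pm) (E : List ℕ → M.F.S), IsEmb M t E → ¬ FalseUnder M t E


/-- `□^d_α A`. -/
def mkBox {Pm : MBParams} (d : Side) (α : Pm.J) (A : MBForm Pm) : MBForm Pm :=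
  match d with
  | .c => .boxc α A
  | .o => .boxo α A

/-- The total order `⪯` on `I × {c,o}`: `pleq α d β d'` means `(α,d) ⪯ (β,d')`. -/
def pleq : ℝ → Side → ℝ → Side → Prop
  | α, .o, β, .c => α < β
  | α, _, β, _ => α ≤ β

/-- Provability in the nested-sequent calculus **NSMB**.  The boolean
parameter records whether the rule (cut) may be used. -/
inductive Provable {Pm : MBParams} : Bool → NSeq Pm → Prop
  /-- axiom `‖A, Γ ⇒ Δ, A, T‖` -/
  | axId {cut : Bool} {t : NSeq Pm} {p Γ Δ ts A} :
      SubAt t p (.node Γ Δ ts) → A ∈ Γ → A ∈ Δ → Provable cut t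
  /-- axiom `‖Γ ⇒ Δ, ⊤, T‖` -/
  | axTop {cut : Bool} {t : NSeq Pm} {p Γ Δ ts} :
      SubAt t p (.node Γ Δ ts) → MBForm.top ∈ Δ → Provable cut t
  /-- axiom `‖⊥, Γ ⇒ Δ, T‖` -/
  | axBot {cut : Bool} {t : NSeq Pm} {p Γ Δ ts} :
      SubAt t p (.node Γ Δ ts) → MBForm.bot ∈ Γ → Provable cut t
  /-- axiom `‖Γ ⇒ Δ, □^o_1 A, T‖` -/
  | axBoxO1 {cut : Bool} {t : NSeq Pm} {p Γ Δ ts A} :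
      SubAt t p (.node Γ Δ ts) → MBForm.boxo ⟨1, Pm.one_mem⟩ A ∈ Δ → Provable cut t
  /-- rule (cut) -/
  | cutR {t : NSeq Pm} {p Γ Δ ts A} :
      SubAt t p (.node Γ Δ ts) →
      Provable true (t.setSeq p Γ (insert A Δ)) →
      Provable true (t.setSeq p (insert A Γ) Δ) →
      Provable true t
  /-- rule (wL) -/
  | wL {cut : Bool} {t : NSeq Pm} {p Γ Δ ts A} :
      SubAt t p (.node Γ Δ ts) → Provable cut t →
      Provable cut (t.setSeq p (insert A Γ) Δ)
  /-- rule (wR) -/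
  | wR {cut : Bool} {t : NSeq Pm} {p Γ Δ ts A} :
      SubAt t p (.node Γ Δ ts) → Provable cut t →
      Provable cut (t.setSeq p Γ (insert A Δ))
  /-- rule (¬L) -/
  | negL {cut : Bool} {t : NSeq Pm} {p Γ Δ ts A} :
      SubAt t p (.node Γ Δ ts) →
      Provable cut (t.setSeq p Γ (insert A Δ)) →
      Provable cut (t.setSeq p (insert (MBForm.neg A) Γ) Δ)
  /-- rule (¬R) -/
  | negR {cut : Bool} {t : NSeq Pm} {p Γ Δ ts A} :
      SubAt t p (.node Γ Δ ts) →
      Provable cut (t.setSeq p (insert A Γ) Δ) →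
      Provable cut (t.setSeq p Γ (insert (MBForm.neg A) Δ))
  /-- rule (∧L) -/
  | andL {cut : Bool} {t : NSeq Pm} {p Γ Δ ts A B} :
      SubAt t p (.node Γ Δ ts) →
      Provable cut (t.setSeq p (insert A (insert B Γ)) Δ) →
      Provable cut (t.setSeq p (insert (MBForm.conj A B) Γ) Δ)
  /-- rule (∧R) -/
  | andR {cut : Bool} {t : NSeq Pm} {p Γ Δ ts A B} :
      SubAt t p (.node Γ Δ ts) →
      Provable cut (t.setSeq p Γ (insert A Δ)) →
      Provable cut (t.setSeq p Γ (insert B Δ)) →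
      Provable cut (t.setSeq p Γ (insert (MBForm.conj A B) Δ))
  /-- rule (□L), with side condition `(α,d) ⪯ (β,d')` -/
  | boxL {cut : Bool} {t : NSeq Pm} {p Γ Δ ts i l u Γ' Δ' ts' A} {α : Pm.J} {d : Side} :
      SubAt t p (.node Γ Δ ts) → NSeqs.get ts i = some (l, u) →
      SubAt t (p ++ [i]) (.node Γ' Δ' ts') →
      pleq (α : ℝ) d l.α l.d →
      Provable cut (t.setSeq (p ++ [i]) (insert A Γ') Δ') →
      Provable cut (t.setSeq p (insert (mkBox d α A) Γ) Δ)
  /-- rule (□L sym), with side condition `(α,d) ⪯ (β,d')` -/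
  | boxLsym {cut : Bool} {t : NSeq Pm} {p Γ Δ ts i l u Γ' Δ' ts' A} {α : Pm.J} {d : Side} :
      SubAt t p (.node Γ Δ ts) → NSeqs.get ts i = some (l, u) →
      SubAt t (p ++ [i]) (.node Γ' Δ' ts') →
      pleq (α : ℝ) d l.α l.d →
      Provable cut (t.setSeq p (insert A Γ) Δ) →
      Provable cut (t.setSeq (p ++ [i]) (insert (mkBox d α A) Γ') Δ')
  /-- rule (□L self), with side condition `(α,d) ≠ (1,o)` -/
  | boxLself {cut : Bool} {t : NSeq Pm} {p Γ Δ ts A} {α : Pm.J} {d : Side} :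
      SubAt t p (.node Γ Δ ts) → ¬((α : ℝ) = 1 ∧ d = Side.o) →
      Provable cut (t.setSeq p (insert A Γ) Δ) →
      Provable cut (t.setSeq p (insert (mkBox d α A) Γ) Δ)
  /-- rule (□^c_0): erase `A` from the left of one node and add `□^c_0 A`
  to the left of another arbitrary node -/
  | boxC0 {cut : Bool} {t : NSeq Pm} {p Γ Δ ts q Γ'' Δ'' ts'' A} :
      SubAt t p (.node Γ Δ ts) → SubAt t q (.node Γ'' Δ'' ts'') →
      Provable cut (t.setSeq p (insert A Γ) Δ) →
      Provable cut (t.setSeq q (insert (MBForm.boxc ⟨0, Pm.zero_mem⟩ A) Γ'') Δ'')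
  /-- rule (□R) -/
  | boxR {cut : Bool} {t : NSeq Pm} {p Γ Δ ts A} {l : MBLab Pm} :
      SubAt t p (.node Γ Δ ts) →
      Provable cut (t.addChild p l (.node ∅ {A} .nil)) →
      Provable cut (t.setSeq p Γ (insert (l.box A) Δ))
  /-- rule (□R self) -/
  | boxRself {cut : Bool} {t : NSeq Pm} {p Γ Δ ts A} :
      SubAt t p (.node Γ Δ ts) →
      Provable cut (t.setSeq p Γ (insert A Δ)) →
      Provable cut (t.setSeq p Γ (insert (MBForm.boxc ⟨1, Pm.one_mem⟩ A) Δ))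


/-- The subformula relation. -/
inductive Subf {Pm : MBParams} : MBForm Pm → MBForm Pm → Prop
  | refl (A : MBForm Pm) : Subf A A
  | negS {A B : MBForm Pm} : Subf A B → Subf A (.neg B)
  | conjL {A B C : MBForm Pm} : Subf A B → Subf A (.conj B C)
  | conjR {A B C : MBForm Pm} : Subf A C → Subf A (.conj B C)
  | boxcS {A B : MBForm Pm} {α : Pm.J} : Subf A B → Subf A (.boxc α B)
  | boxoS {A B : MBForm Pm} {α : Pm.J} : Subf A B → Subf A (.boxo α B)

/-- `A` occurs in (some sequent of) the nested-sequent `t`. -/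
def OccursIn {Pm : MBParams} (A : MBForm Pm) (t : NSeq Pm) : Prop :=
  ∃ p Γ Δ ts, SubAt t p (.node Γ Δ ts) ∧ (A ∈ Γ ∨ A ∈ Δ)

/-- One step of the saturation procedure used to build `Γ_C ⇒ Δ_C, T_C`.
The state is a nested-sequent together with the set of (address, formula)
occurrences of right-hand boxed formulas that have already been processed by
step (8). -/
inductive SatStep {Pm : MBParams} :
    NSeq Pm × Set (List ℕ × MBForm Pm) → NSeq Pm × Set (List ℕ × MBForm Pm) → Prop
  /-- step (1): `A ∧ B` on the left -/
  | andL {t D p Γ Δ ts A B} :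
      SubAt t p (.node Γ Δ ts) → MBForm.conj A B ∈ Γ →
      SatStep (t, D) (t.setSeq p (insert A (insert B Γ)) Δ, D)
  /-- step (2): `A ∧ B` on the right; the disjunct keeping unprovability is adopted -/
  | andR {t D p Γ Δ ts A B C} :
      SubAt t p (.node Γ Δ ts) → MBForm.conj A B ∈ Δ → (C = A ∨ C = B) →
      ¬ Provable true (t.setSeq p Γ (insert C Δ)) →
      SatStep (t, D) (t.setSeq p Γ (insert C Δ), D)
  /-- step (3): `¬A` on the left -/
  | negL {t D p Γ Δ ts A} :
      SubAt t p (.node Γ Δ ts) → MBForm.neg A ∈ Γ →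
      SatStep (t, D) (t.setSeq p Γ (insert A Δ), D)
  /-- step (4): `¬A` on the right -/
  | negR {t D p Γ Δ ts A} :
      SubAt t p (.node Γ Δ ts) → MBForm.neg A ∈ Δ →
      SatStep (t, D) (t.setSeq p (insert A Γ) Δ, D)
  /-- step (5): `□^d_α A` on the left of the parent of a bracket with `(α,d) ⪯ (β,d')` -/
  | boxL {t D p Γ Δ ts i l u Γ' Δ' ts' A} {α : Pm.J} {d : Side} :
      SubAt t p (.node Γ Δ ts) → NSeqs.get ts i = some (l, u) →
      SubAt t (p ++ [i]) (.node Γ' Δ' ts') →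
      pleq (α : ℝ) d l.α l.d → mkBox d α A ∈ Γ →
      SatStep (t, D) (t.setSeq (p ++ [i]) (insert A Γ') Δ', D)
  /-- step (6): `□^d_α A` on the left of the child of a bracket with `(α,d) ⪯ (β,d')` -/
  | boxLsym {t D p Γ Δ ts i l u Γ' Δ' ts' A} {α : Pm.J} {d : Side} :
      SubAt t p (.node Γ Δ ts) → NSeqs.get ts i = some (l, u) →
      SubAt t (p ++ [i]) (.node Γ' Δ' ts') →
      pleq (α : ℝ) d l.α l.d → mkBox d α A ∈ Γ' →
      SatStep (t, D) (t.setSeq p (insert A Γ) Δ, D)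
  /-- step (7): `□^d_α A` on the left, `(α,d) ≠ (1,o)` -/
  | boxLself {t D p Γ Δ ts A} {α : Pm.J} {d : Side} :
      SubAt t p (.node Γ Δ ts) → ¬((α : ℝ) = 1 ∧ d = Side.o) → mkBox d α A ∈ Γ →
      SatStep (t, D) (t.setSeq p (insert A Γ) Δ, D)
  /-- step (8): `□^d_α A` on the right (`α ≠ 1`), performed once per occurrence -/
  | boxR {t D p Γ Δ ts A} {α : Pm.J} {d : Side} (hne : (α : ℝ) ≠ 1) :
      SubAt t p (.node Γ Δ ts) → mkBox d α A ∈ Δ → (p, mkBox d α A) ∉ D →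
      SatStep (t, D)
        (t.addChild p ⟨(α : ℝ), α.2, hne, d⟩ (.node ∅ {A} .nil),
         insert (p, mkBox d α A) D)
  /-- step (9): `□^c_1 A` on the right -/
  | boxRself {t D p Γ Δ ts A} :
      SubAt t p (.node Γ Δ ts) → MBForm.boxc ⟨1, Pm.one_mem⟩ A ∈ Δ →
      SatStep (t, D) (t.setSeq p Γ (insert A Δ), D)
  /-- step (10): `□^c_0 A` on the left of some node: add `A` to the left of any node -/
  | boxC0 {t D p Γ Δ ts q Γ'' Δ'' ts'' A} :
      SubAt t p (.node Γ Δ ts) → MBForm.boxc ⟨0, Pm.zero_mem⟩ A ∈ Γ →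
      SubAt t q (.node Γ'' Δ'' ts'') →
      SatStep (t, D) (t.setSeq q (insert A Γ'') Δ'', D)

/-- A state of the saturation procedure is saturated (terminal) when no
saturation step changes it any more. -/
def Saturated {Pm : MBParams} (s : NSeq Pm × Set (List ℕ × MBForm Pm)) : Prop :=
  ∀ s', SatStep s s' → s' = s


mutual
/-- The subtree of `t` at address `p`, as a function. -/
def NSeq.sub? {Pm : MBParams} : NSeq Pm → List ℕ → Option (NSeq Pm)
  | t, [] => some t
  | .node _ _ ts, i :: p => NSeqs.subs? ts i p
def NSeqs.subs? {Pm : MBParams} : NSeqs Pm → ℕ → List ℕ → Option (NSeq Pm)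
  | .nil, _, _ => none
  | .cons _ t _, 0, p => t.sub? p
  | .cons _ _ ts, n+1, p => NSeqs.subs? ts n p
end

/-- The label of the edge from the node at address `p` to its `i`-th child. -/
def labelAt {Pm : MBParams} (t : NSeq Pm) (p : List ℕ) (i : ℕ) : Option (MBLab Pm) :=
  match t.sub? p with
  | some (.node _ _ ts) => (NSeqs.get ts i).map Prod.fst
  | none => none

/-- The set of elements of `J` appearing in a formula. -/
def MBForm.jsetF {Pm : MBParams} : MBForm Pm → Set ℝ
  | .var _ => ∅
  | .top => ∅
  | .bot => ∅
  | .neg A => A.jsetF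
  | .conj A B => A.jsetF ∪ B.jsetF
  | .boxc α A => insert (α : ℝ) A.jsetF
  | .boxo α A => insert (α : ℝ) A.jsetF

mutual
/-- The numbers appearing in a nested-sequent (in formulas or brackets). -/
def NSeq.jsetT {Pm : MBParams} : NSeq Pm → Set ℝ
  | .node Γ Δ ts =>
      (⋃ A ∈ Γ, MBForm.jsetF A) ∪ (⋃ A ∈ Δ, MBForm.jsetF A) ∪ NSeqs.jsetTs ts
def NSeqs.jsetTs {Pm : MBParams} : NSeqs Pm → Set ℝ
  | .nil => ∅
  | .cons l t ts => insert l.α (t.jsetT ∪ NSeqs.jsetTs ts)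
end

/-- `(Γ ⇒ Δ, T)_J`: the numbers appearing in the nested-sequent, with `0` and `1`. -/
def jset {Pm : MBParams} (t : NSeq Pm) : Set ℝ :=
  insert (0:ℝ) (insert (1:ℝ) t.jsetT)

/-- `U` is an interpolated set of `Js`. -/
def Interpolated (Js U : Set ℝ) : Prop :=
  U.Finite ∧ U ⊆ Set.Icc (0:ℝ) 1 ∧ Js ⊆ U ∧
    ∀ α ∈ Js, ∀ β ∈ Js, α < β → (∀ γ ∈ Js, ¬ (α < γ ∧ γ < β)) →
      ∃! δ, δ ∈ U ∧ α < δ ∧ δ < β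

/-- `Suc U α`: the successor of `α` in the interpolated set `U` (with `Suc 1 = 1`). -/
noncomputable def Suc (U : Set ℝ) (α : ℝ) : ℝ := sInf ((U ∩ Set.Ioi α) ∪ {1})

/-- Auxiliary value of the canonical relation in case `q` is the child of `p`
via a bracket (`β` for `[·]^c_β`, `Suc β` for `[·]^o_β`), and `0` otherwise. -/
noncomputable def lval {Pm : MBParams} (t : NSeq Pm) (U : Set ℝ) (p q : List ℕ) : ℝ :=
  match q.getLast? with
  | none => 0
  | some i =>
      if q.dropLast = p then
        match labelAt t p i with
        | some l => (match l.d with | Side.c => l.α | Side.o => Suc U l.α)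
        | none => 0
      else 0

/-- The canonical relation `R_C` (on node addresses). -/
noncomputable def RC {Pm : MBParams} (t : NSeq Pm) (U : Set ℝ) (p q : List ℕ) : ℝ :=
  if p = q then 1 else max (lval t U p q) (lval t U q p)

/-- The worlds of the canonical model: the nodes of the saturated nested-sequent. -/
def World {Pm : MBParams} (t : NSeq Pm) : Type := {p : List ℕ // IsNode t p}

/-- The canonical relation `R_C`, as a function on the worlds. -/
noncomputable def RCW {Pm : MBParams} (t : NSeq Pm) (U : Set ℝ) (p q : World t) : ℝ :=
  RC t U p.val q.val

/-- The canonical valuation `V_C` of the propositional variables. -/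
def VC {Pm : MBParams} (t : NSeq Pm) (n : ℕ) : Set (World t) :=
  {p | ∃ Γ Δ ts, SubAt t p.val (.node Γ Δ ts) ∧ MBForm.var n ∈ Γ}

/-- `P_C`: the family of all definable sets of worlds of the canonical model. -/
def PC {Pm : MBParams} (t : NSeq Pm) (U : Set ℝ) : Set (Set (World t)) :=
  {X | ∃ A : MBForm Pm, X = MBForm.valR (RCW t U) (VC t) A}


section Auxiliary
variable {Pm : MBParams}

variable {Pm : MBParams}

lemma subs?_eq (i : ℕ) : ∀ (ts : NSeqs Pm) (p : List ℕ),
    NSeqs.subs? ts i p = (ts.get i).bind (fun x => x.2.sub? p) := by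
  induction i with
  | zero => intro ts p; cases ts <;> simp [NSeqs.subs?, NSeqs.get]
  | succ n ih => intro ts p; cases ts <;> simp [NSeqs.subs?, NSeqs.get, ih]

lemma sub?_nil (t : NSeq Pm) : t.sub? [] = some t := by cases t <;> rfl

lemma sub?_cons (Γ Δ : Finset (MBForm Pm)) (ts : NSeqs Pm) (i : ℕ) (p : List ℕ) :
    (NSeq.node Γ Δ ts).sub? (i :: p) = (ts.get i).bind (fun x => x.2.sub? p) := by
  show NSeqs.subs? ts i p = _
  exact subs?_eq i ts p

lemma subAt_iff {t u : NSeq Pm} {p : List ℕ} : SubAt t p u ↔ t.sub? p = some u := by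
  constructor
  · intro h
    induction h with
    | here t => exact sub?_nil t
    | there hget _ ih => rw [sub?_cons, hget]; exact ih
  · intro h
    induction p generalizing t with
    | nil => rw [sub?_nil] at h; cases h; exact SubAt.here _
    | cons i p ih =>
      cases t with
      | node Γ Δ ts =>
        rw [sub?_cons] at h
        cases hg : ts.get i with
        | none => rw [hg] at h; simp at h
        | some x =>
          rw [hg] at h; simp only [Option.bind_some] at h
          exact SubAt.there (u := x.2) (l := x.1) hg (ih h)

lemma subAt_unique {t u v : NSeq Pm} {p : List ℕ} (h1 : SubAt t p u) (h2 : SubAt t p v) :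
    u = v := by
  rw [subAt_iff] at h1 h2; rw [h1] at h2; exact (Option.some_injective _ h2)

def nlen : NSeqs Pm → ℕ
  | .nil => 0
  | .cons _ _ ts => nlen ts + 1

lemma get_nlen_none : ∀ (n : ℕ) (ts : NSeqs Pm), nlen ts = n → ts.get n = none := by
  intro n
  induction n with
  | zero => intro ts h; cases ts with
    | nil => rfl
    | cons l t ts => simp [nlen] at h
  | succ n ih => intro ts h; cases ts with
    | nil => rfl
    | cons l t ts => simp only [nlen, Nat.add_right_cancel_iff] at h
                     exact ih ts h

lemma get_snoc (l : MBLab Pm) (u : NSeq Pm) :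
    ∀ (n : ℕ) (ts : NSeqs Pm), nlen ts = n → ∀ j,
      (ts.snoc l u).get j = if j = n then some (l, u) else ts.get j := by
  intro n
  induction n with
  | zero =>
    intro ts h j
    cases ts with
    | nil => cases j <;> simp [NSeqs.snoc, NSeqs.get]
    | cons l' t ts => simp [nlen] at h
  | succ n ih =>
    intro ts h j
    cases ts with
    | nil => simp [nlen] at h
    | cons l' t ts =>
      simp only [nlen, Nat.add_right_cancel_iff] at h
      cases j with
      | zero => simp [NSeqs.snoc, NSeqs.get]
      | succ k => simp only [NSeqs.snoc, NSeqs.get, ih ts h k, Nat.add_right_cancel_iff]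

lemma get_setSeqs (p : List ℕ) (Γ Δ : Finset (MBForm Pm)) :
    ∀ (i : ℕ) (ts : NSeqs Pm) (j : ℕ),
      (NSeqs.setSeqs ts i p Γ Δ).get j =
        if j = i then (ts.get i).map (fun x => (x.1, x.2.setSeq p Γ Δ)) else ts.get j := by
  intro i
  induction i with
  | zero =>
    intro ts j
    cases ts with
    | nil => cases j <;> simp [NSeqs.setSeqs, NSeqs.get]
    | cons l t ts => cases j <;> simp [NSeqs.setSeqs, NSeqs.get]
  | succ n ih =>
    intro ts j
    cases ts with
    | nil => cases j <;> simp [NSeqs.setSeqs, NSeqs.get]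
    | cons l t ts =>
      cases j with
      | zero => simp [NSeqs.setSeqs, NSeqs.get]
      | succ k => simp only [NSeqs.setSeqs, NSeqs.get, ih ts k, Nat.add_right_cancel_iff]

lemma get_addChilds (p : List ℕ) (l : MBLab Pm) (u : NSeq Pm) :
    ∀ (i : ℕ) (ts : NSeqs Pm) (j : ℕ),
      (NSeqs.addChilds ts i p l u).get j =
        if j = i then (ts.get i).map (fun x => (x.1, x.2.addChild p l u)) else ts.get j := by
  intro i
  induction i with
  | zero =>
    intro ts j
    cases ts with
    | nil => cases j <;> simp [NSeqs.addChilds, NSeqs.get]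
    | cons l' t ts => cases j <;> simp [NSeqs.addChilds, NSeqs.get]
  | succ n ih =>
    intro ts j
    cases ts with
    | nil => cases j <;> simp [NSeqs.addChilds, NSeqs.get]
    | cons l' t ts =>
      cases j with
      | zero => simp [NSeqs.addChilds, NSeqs.get]
      | succ k => simp only [NSeqs.addChilds, NSeqs.get, ih ts k, Nat.add_right_cancel_iff]

variable {Pm : MBParams}

/-- The sequent at address `p`. -/
def seqAt (t : NSeq Pm) (p : List ℕ) : Option (Finset (MBForm Pm) × Finset (MBForm Pm)) :=
  (t.sub? p).map (fun u => match u with | .node Γ Δ _ => (Γ, Δ))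

lemma seqAt_nil (Γ Δ : Finset (MBForm Pm)) (ts : NSeqs Pm) :
    seqAt (NSeq.node Γ Δ ts) [] = some (Γ, Δ) := rfl

lemma seqAt_cons (Γ Δ : Finset (MBForm Pm)) (ts : NSeqs Pm) (i : ℕ) (p : List ℕ) :
    seqAt (NSeq.node Γ Δ ts) (i :: p) = (ts.get i).bind (fun x => seqAt x.2 p) := by
  unfold seqAt
  rw [sub?_cons]
  cases ts.get i <;> rfl

lemma seqAt_eq_some_iff {t : NSeq Pm} {p : List ℕ} {Γ Δ : Finset (MBForm Pm)} :
    seqAt t p = some (Γ, Δ) ↔ ∃ ts, t.sub? p = some (.node Γ Δ ts) := by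
  unfold seqAt
  cases h : t.sub? p with
  | none => simp
  | some u => cases u with
    | node Γ' Δ' ts' =>
      simp only [Option.map_some, Option.some_inj]
      constructor
      · intro he
        cases he
        exact ⟨ts', rfl⟩
      · rintro ⟨ts, he⟩
        cases he
        rfl

lemma seqAt_isSome_iff {t : NSeq Pm} {p : List ℕ} :
    (seqAt t p).isSome ↔ (t.sub? p).isSome := by
  unfold seqAt
  cases t.sub? p <;> simp

lemma subAt_of_seqAt {t : NSeq Pm} {p : List ℕ} {Γ Δ : Finset (MBForm Pm)}
    (h : seqAt t p = some (Γ, Δ)) : ∃ ts, SubAt t p (.node Γ Δ ts) := by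
  obtain ⟨ts, h⟩ := seqAt_eq_some_iff.mp h
  exact ⟨ts, subAt_iff.mpr h⟩

lemma seqAt_of_subAt {t : NSeq Pm} {p : List ℕ} {Γ Δ : Finset (MBForm Pm)} {ts : NSeqs Pm}
    (h : SubAt t p (.node Γ Δ ts)) : seqAt t p = some (Γ, Δ) :=
  seqAt_eq_some_iff.mpr ⟨ts, subAt_iff.mp h⟩

lemma labelAt_nil (Γ Δ : Finset (MBForm Pm)) (ts : NSeqs Pm) (i : ℕ) :
    labelAt (NSeq.node Γ Δ ts) [] i = (ts.get i).map Prod.fst := by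
  unfold labelAt
  rw [sub?_nil]

lemma labelAt_cons (Γ Δ : Finset (MBForm Pm)) (ts : NSeqs Pm) (j : ℕ) (q : List ℕ) (i : ℕ) :
    labelAt (NSeq.node Γ Δ ts) (j :: q) i = (ts.get j).bind (fun x => labelAt x.2 q i) := by
  unfold labelAt
  rw [sub?_cons]
  cases h : ts.get j with
  | none => rfl
  | some x => rfl

/-- Number of children of the node at address `p`. -/
def numKids (t : NSeq Pm) (p : List ℕ) : ℕ :=
  match t.sub? p with
  | some (.node _ _ ts) => nlen ts
  | none => 0

lemma numKids_nil (Γ Δ : Finset (MBForm Pm)) (ts : NSeqs Pm) :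
    numKids (NSeq.node Γ Δ ts) [] = nlen ts := rfl

lemma numKids_cons (Γ Δ : Finset (MBForm Pm)) (ts : NSeqs Pm) {j : ℕ} {x}
    (h : ts.get j = some x) (q : List ℕ) :
    numKids (NSeq.node Γ Δ ts) (j :: q) = numKids x.2 q := by
  unfold numKids
  rw [sub?_cons, h, Option.bind_some]

/-- `setSeq` with an invalid or identical sequent. -/
lemma setSeqs_self_aux : ∀ (i : ℕ) (ts : NSeqs Pm) (l : MBLab Pm) (u : NSeq Pm),
    ts.get i = some (l, u) → ∀ (p : List ℕ) Γ Δ, u.setSeq p Γ Δ = u →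
      NSeqs.setSeqs ts i p Γ Δ = ts := by
  intro i
  induction i with
  | zero =>
    intro ts l u hget p Γ Δ hu
    cases ts with
    | nil => simp [NSeqs.get] at hget
    | cons l' t ts =>
      simp only [NSeqs.get, Option.some_inj] at hget
      cases hget
      simp [NSeqs.setSeqs, hu]
  | succ n ih =>
    intro ts l u hget p Γ Δ hu
    cases ts with
    | nil => simp [NSeqs.get] at hget
    | cons l' t ts =>
      simp only [NSeqs.get] at hget
      simp [NSeqs.setSeqs, ih ts l u hget p Γ Δ hu]

lemma setSeq_self : ∀ (p : List ℕ) (t : NSeq Pm) {Γ Δ ts},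
    t.sub? p = some (.node Γ Δ ts) → t.setSeq p Γ Δ = t := by
  intro p
  induction p with
  | nil =>
    intro t Γ Δ ts h
    rw [sub?_nil] at h
    cases h
    rfl
  | cons i p ih =>
    intro t Γ Δ ts h
    cases t with
    | node Γ0 Δ0 ts0 =>
      rw [sub?_cons] at h
      cases hg : ts0.get i with
      | none => rw [hg] at h; simp at h
      | some x =>
        rw [hg] at h
        simp only [Option.bind_some] at h
        show NSeq.node Γ0 Δ0 (NSeqs.setSeqs ts0 i p Γ Δ) = _
        rw [setSeqs_self_aux i ts0 x.1 x.2 hg p Γ Δ (ih x.2 h)]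

lemma seqAt_setSeq : ∀ (p : List ℕ) (t : NSeq Pm) (q : List ℕ) (Γ' Δ' : Finset (MBForm Pm)),
    seqAt (t.setSeq p Γ' Δ') q =
      if q = p ∧ (t.sub? p).isSome then some (Γ', Δ') else seqAt t q := by
  intro p
  induction p with
  | nil =>
    intro t q Γ' Δ'
    cases t with
    | node Γ Δ ts =>
      show seqAt (NSeq.node Γ' Δ' ts) q = _
      cases q with
      | nil => simp [seqAt_nil, sub?_nil]
      | cons j q' => simp [seqAt_cons]
  | cons i p ih =>
    intro t q Γ' Δ'
    cases t with
    | node Γ Δ ts =>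
      show seqAt (NSeq.node Γ Δ (NSeqs.setSeqs ts i p Γ' Δ')) q = _
      cases q with
      | nil => simp [seqAt_nil]
      | cons j q' =>
        rw [seqAt_cons, seqAt_cons, sub?_cons]
        rw [get_setSeqs]
        by_cases hji : j = i
        · subst hji
          rw [if_pos rfl]
          cases hg : ts.get j with
          | none => simp [hg]
          | some x =>
            simp only [hg, Option.map_some, Option.bind_some]
            rw [ih x.2 q' Γ' Δ']
            simp only [List.cons.injEq, true_and]
        · rw [if_neg hji]
          have : ¬ (j :: q' = i :: p) := by simp [hji]
          rw [if_neg (by intro hc; exact this hc.1)]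

variable {Pm : MBParams}

lemma labelAt_setSeq : ∀ (p : List ℕ) (t : NSeq Pm) (q : List ℕ) (i0 : ℕ)
    (Γ' Δ' : Finset (MBForm Pm)),
    labelAt (t.setSeq p Γ' Δ') q i0 = labelAt t q i0 := by
  intro p
  induction p with
  | nil =>
    intro t q i0 Γ' Δ'
    cases t with
    | node Γ Δ ts =>
      show labelAt (NSeq.node Γ' Δ' ts) q i0 = _
      cases q with
      | nil => rw [labelAt_nil, labelAt_nil]
      | cons j q' => rw [labelAt_cons, labelAt_cons]
  | cons i p ih =>
    intro t q i0 Γ' Δ'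
    cases t with
    | node Γ Δ ts =>
      show labelAt (NSeq.node Γ Δ (NSeqs.setSeqs ts i p Γ' Δ')) q i0 = _
      cases q with
      | nil =>
        rw [labelAt_nil, labelAt_nil, get_setSeqs]
        by_cases hji : i0 = i
        · subst hji
          rw [if_pos rfl]
          cases ts.get i0 <;> rfl
        · rw [if_neg hji]
      | cons j q' =>
        rw [labelAt_cons, labelAt_cons, get_setSeqs]
        by_cases hji : j = i
        · subst hji
          rw [if_pos rfl]
          cases ts.get j with
          | none => rfl
          | some x =>
            simp only [Option.map_some, Option.bind_some]
            exact ih x.2 q' i0 Γ' Δ'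
        · rw [if_neg hji]

lemma seqAt_addChild : ∀ (p : List ℕ) (t : NSeq Pm) (q : List ℕ) (l : MBLab Pm)
    (G D : Finset (MBForm Pm)), (t.sub? p).isSome →
    seqAt (t.addChild p l (.node G D .nil)) q =
      if q = p ++ [numKids t p] then some (G, D) else seqAt t q := by
  intro p
  induction p with
  | nil =>
    intro t q l G D _
    cases t with
    | node Γ Δ ts =>
      show seqAt (NSeq.node Γ Δ (ts.snoc l (.node G D .nil))) q = _
      rw [numKids_nil]
      cases q with
      | nil => simp [seqAt_nil]
      | cons j q' =>
        rw [seqAt_cons, seqAt_cons, get_snoc l _ (nlen ts) ts rfl j]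
        by_cases hj : j = nlen ts
        · subst hj
          rw [if_pos rfl, get_nlen_none (nlen ts) ts rfl]
          simp only [Option.bind_some, Option.bind_none]
          cases q' with
          | nil => simp [seqAt_nil]
          | cons c q'' =>
            rw [seqAt_cons]
            have h1 : (NSeqs.nil (Pm := Pm)).get c = none := rfl
            rw [h1]
            simp
        · rw [if_neg hj]
          have : ¬ (j :: q' = [] ++ [nlen ts]) := by simp [hj]
          rw [if_neg this]
  | cons i p ih =>
    intro t q l G D hs
    cases t with
    | node Γ Δ ts =>
      rw [sub?_cons] at hs
      cases hg : ts.get i with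
      | none => rw [hg] at hs; simp at hs
      | some x =>
        rw [hg] at hs
        simp only [Option.bind_some] at hs
        show seqAt (NSeq.node Γ Δ (NSeqs.addChilds ts i p l (.node G D .nil))) q = _
        have hnk : numKids (NSeq.node Γ Δ ts) (i :: p) = numKids x.2 p :=
          numKids_cons Γ Δ ts hg p
        rw [hnk]
        cases q with
        | nil =>
          rw [seqAt_nil, seqAt_nil]
          have : ¬ (([] : List ℕ) = (i :: p) ++ [numKids x.2 p]) := by simp
          rw [if_neg this]
        | cons j q' =>
          rw [seqAt_cons, seqAt_cons, get_addChilds]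
          by_cases hji : j = i
          · subst hji
            rw [if_pos rfl, hg]
            simp only [Option.map_some, Option.bind_some]
            rw [ih x.2 q' l G D hs]
            simp only [List.cons_append, List.cons.injEq, true_and]
          · rw [if_neg hji]
            have : ¬ (j :: q' = (i :: p) ++ [numKids x.2 p]) := by
              simp only [List.cons_append, List.cons.injEq]
              intro hc
              exact hji hc.1
            rw [if_neg this]

lemma labelAt_addChild : ∀ (p : List ℕ) (t : NSeq Pm) (q : List ℕ) (i0 : ℕ) (l : MBLab Pm)
    (G D : Finset (MBForm Pm)), (t.sub? p).isSome →
    labelAt (t.addChild p l (.node G D .nil)) q i0 =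
      if q = p ∧ i0 = numKids t p then some l else labelAt t q i0 := by
  intro p
  induction p with
  | nil =>
    intro t q i0 l G D _
    cases t with
    | node Γ Δ ts =>
      show labelAt (NSeq.node Γ Δ (ts.snoc l (.node G D .nil))) q i0 = _
      rw [numKids_nil]
      cases q with
      | nil =>
        rw [labelAt_nil, labelAt_nil, get_snoc l _ (nlen ts) ts rfl i0]
        by_cases hi : i0 = nlen ts
        · subst hi
          rw [if_pos rfl, if_pos ⟨rfl, rfl⟩]
          rfl
        · rw [if_neg hi, if_neg (by intro hc; exact hi hc.2)]
      | cons j q' =>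
        rw [labelAt_cons, labelAt_cons, get_snoc l _ (nlen ts) ts rfl j]
        have hne : ¬ (j :: q' = ([] : List ℕ) ∧ i0 = nlen ts) := by
          intro hc; exact List.cons_ne_nil j q' hc.1
        rw [if_neg hne]
        by_cases hj : j = nlen ts
        · subst hj
          rw [if_pos rfl, get_nlen_none (nlen ts) ts rfl]
          simp only [Option.bind_some, Option.bind_none]
          cases q' with
          | nil => rw [labelAt_nil]; rfl
          | cons c q'' => rw [labelAt_cons]; rfl
        · rw [if_neg hj]
  | cons i p ih =>
    intro t q i0 l G D hs
    cases t with
    | node Γ Δ ts =>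
      rw [sub?_cons] at hs
      cases hg : ts.get i with
      | none => rw [hg] at hs; simp at hs
      | some x =>
        rw [hg] at hs
        simp only [Option.bind_some] at hs
        show labelAt (NSeq.node Γ Δ (NSeqs.addChilds ts i p l (.node G D .nil))) q i0 = _
        have hnk : numKids (NSeq.node Γ Δ ts) (i :: p) = numKids x.2 p :=
          numKids_cons Γ Δ ts hg p
        rw [hnk]
        cases q with
        | nil =>
          rw [labelAt_nil, labelAt_nil, get_addChilds]
          have hne : ¬ (([] : List ℕ) = i :: p ∧ i0 = numKids x.2 p) := by
            intro hc; exact (List.cons_ne_nil i p) hc.1.symm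
          rw [if_neg hne]
          by_cases hi : i0 = i
          · subst hi
            rw [if_pos rfl]
            cases ts.get i0 <;> rfl
          · rw [if_neg hi]
        | cons j q' =>
          rw [labelAt_cons, labelAt_cons, get_addChilds]
          by_cases hji : j = i
          · subst hji
            rw [if_pos rfl, hg]
            simp only [Option.map_some, Option.bind_some]
            rw [ih x.2 q' i0 l G D hs]
            simp only [List.cons.injEq, true_and]
          · have hne : ¬ (j :: q' = i :: p ∧ i0 = numKids x.2 p) := by
              intro hc
              injection hc.1 with h1 _
              exact hji h1
            rw [if_neg hji, if_neg hne]

variable {Pm : MBParams}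

lemma mkLab_box (α : Pm.J) (hne : (α:ℝ) ≠ 1) (d : Side) (A : MBForm Pm) :
    (⟨(α:ℝ), α.2, hne, d⟩ : MBLab Pm).box A = mkBox d α A := by
  cases d <;> rfl

lemma sub?_append (q : List ℕ) : ∀ (p : List ℕ) (t : NSeq Pm),
    t.sub? (p ++ q) = (t.sub? p).bind (fun u => u.sub? q) := by
  intro p
  induction p with
  | nil => intro t; rw [sub?_nil]; rfl
  | cons i p ih =>
    intro t
    cases t with
    | node Γ Δ ts =>
      rw [List.cons_append, sub?_cons, sub?_cons]
      cases ts.get i with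
      | none => rfl
      | some x => simp only [Option.bind_some]; exact ih x.2

lemma labelAt_eq {t : NSeq Pm} {p : List ℕ} {Γ Δ ts} (h : t.sub? p = some (.node Γ Δ ts)) :
    ∀ i, labelAt t p i = (ts.get i).map Prod.fst := by
  intro i; unfold labelAt; rw [h]

lemma numKids_eq {t : NSeq Pm} {p : List ℕ} {Γ Δ ts} (h : t.sub? p = some (.node Γ Δ ts)) :
    numKids t p = nlen ts := by
  unfold numKids; rw [h]

lemma seqAt_new_none {t : NSeq Pm} {p : List ℕ} {Γ Δ ts}
    (h : t.sub? p = some (.node Γ Δ ts)) : seqAt t (p ++ [numKids t p]) = none := by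
  unfold seqAt
  rw [sub?_append, h, Option.bind_some, numKids_eq h, sub?_cons,
    get_nlen_none (nlen ts) ts rfl]
  rfl

lemma labelAt_new_none {t : NSeq Pm} {p : List ℕ} {Γ Δ ts}
    (h : t.sub? p = some (.node Γ Δ ts)) : labelAt t p (numKids t p) = none := by
  rw [labelAt_eq h, numKids_eq h, get_nlen_none (nlen ts) ts rfl]
  rfl

/-- Each saturation step preserves provability backwards. -/
lemma step_prov {s1 s2 : NSeq Pm × Set (List ℕ × MBForm Pm)}
    (h : SatStep s1 s2) (hp : Provable true s2.1) : Provable true s1.1 := by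
  cases h with
  | andL hsub hmem =>
    have h2 := Provable.andL hsub hp
    rwa [Finset.insert_eq_self.mpr hmem, setSeq_self _ _ (subAt_iff.mp hsub)] at h2
  | andR hsub hmem hC hnp => exact absurd hp hnp
  | negL hsub hmem =>
    have h2 := Provable.negL hsub hp
    rwa [Finset.insert_eq_self.mpr hmem, setSeq_self _ _ (subAt_iff.mp hsub)] at h2
  | negR hsub hmem =>
    have h2 := Provable.negR hsub hp
    rwa [Finset.insert_eq_self.mpr hmem, setSeq_self _ _ (subAt_iff.mp hsub)] at h2
  | boxL hsub hget hsub' hpleq hmem =>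
    have h2 := Provable.boxL hsub hget hsub' hpleq hp
    rwa [Finset.insert_eq_self.mpr hmem, setSeq_self _ _ (subAt_iff.mp hsub)] at h2
  | boxLsym hsub hget hsub' hpleq hmem =>
    have h2 := Provable.boxLsym hsub hget hsub' hpleq hp
    rwa [Finset.insert_eq_self.mpr hmem, setSeq_self _ _ (subAt_iff.mp hsub')] at h2
  | boxLself hsub hcond hmem =>
    have h2 := Provable.boxLself hsub hcond hp
    rwa [Finset.insert_eq_self.mpr hmem, setSeq_self _ _ (subAt_iff.mp hsub)] at h2
  | boxRself hsub hmem =>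
    have h2 := Provable.boxRself hsub hp
    rwa [Finset.insert_eq_self.mpr hmem, setSeq_self _ _ (subAt_iff.mp hsub)] at h2
  | boxC0 hsub hmem hsub'' =>
    have h2 := Provable.boxC0 hsub'' hsub hp
    rwa [Finset.insert_eq_self.mpr hmem, setSeq_self _ _ (subAt_iff.mp hsub)] at h2
  | @boxR t D p Γ Δ ts A α d hne hsub hmem hD =>
    have h2 := Provable.boxR (l := ⟨(α:ℝ), α.2, hne, d⟩) hsub hp
    rwa [mkLab_box, Finset.insert_eq_self.mpr hmem,
      setSeq_self _ _ (subAt_iff.mp hsub)] at h2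

lemma unprov_rtg {a b : NSeq Pm × Set (List ℕ × MBForm Pm)}
    (h : Relation.ReflTransGen SatStep a b) (ha : ¬ Provable true a.1) :
    ¬ Provable true b.1 := by
  induction h with
  | refl => exact ha
  | tail _ hbc ih => exact fun hc => ih (step_prov hbc hc)

/-- Every saturation step is either a "grow one sequent" step or an "add child" step. -/
lemma step_shape {s1 s2 : NSeq Pm × Set (List ℕ × MBForm Pm)} (h : SatStep s1 s2) :
    (∃ q Γ Δ Γn Δn, seqAt s1.1 q = some (Γ, Δ) ∧ Γ ⊆ Γn ∧ Δ ⊆ Δn ∧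
        s2.1 = s1.1.setSeq q Γn Δn ∧ s2.2 = s1.2) ∨
    (∃ p, ∃ α : Pm.J, ∃ hne : (α:ℝ) ≠ 1, ∃ d : Side, ∃ A : MBForm Pm,
        (s1.1.sub? p).isSome ∧
        s2.1 = s1.1.addChild p ⟨(α:ℝ), α.2, hne, d⟩ (.node ∅ {A} .nil) ∧
        s2.2 = insert (p, mkBox d α A) s1.2) := by
  cases h with
  | andL hsub hmem =>
    exact Or.inl ⟨_, _, _, _, _, seqAt_of_subAt hsub,
      (Finset.subset_insert _ _).trans (Finset.subset_insert _ _), subset_rfl, rfl, rfl⟩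
  | andR hsub hmem hC hnp =>
    exact Or.inl ⟨_, _, _, _, _, seqAt_of_subAt hsub, subset_rfl,
      Finset.subset_insert _ _, rfl, rfl⟩
  | negL hsub hmem =>
    exact Or.inl ⟨_, _, _, _, _, seqAt_of_subAt hsub, subset_rfl,
      Finset.subset_insert _ _, rfl, rfl⟩
  | negR hsub hmem =>
    exact Or.inl ⟨_, _, _, _, _, seqAt_of_subAt hsub, Finset.subset_insert _ _,
      subset_rfl, rfl, rfl⟩
  | boxL hsub hget hsub' hpleq hmem =>
    exact Or.inl ⟨_, _, _, _, _, seqAt_of_subAt hsub', Finset.subset_insert _ _,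
      subset_rfl, rfl, rfl⟩
  | boxLsym hsub hget hsub' hpleq hmem =>
    exact Or.inl ⟨_, _, _, _, _, seqAt_of_subAt hsub, Finset.subset_insert _ _,
      subset_rfl, rfl, rfl⟩
  | boxLself hsub hcond hmem =>
    exact Or.inl ⟨_, _, _, _, _, seqAt_of_subAt hsub, Finset.subset_insert _ _,
      subset_rfl, rfl, rfl⟩
  | boxRself hsub hmem =>
    exact Or.inl ⟨_, _, _, _, _, seqAt_of_subAt hsub, subset_rfl,
      Finset.subset_insert _ _, rfl, rfl⟩
  | boxC0 hsub hmem hsub'' =>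
    exact Or.inl ⟨_, _, _, _, _, seqAt_of_subAt hsub'', Finset.subset_insert _ _,
      subset_rfl, rfl, rfl⟩
  | @boxR t D p Γ Δ ts A α d hne hsub hmem hD =>
    refine Or.inr ⟨p, α, hne, d, A, ?_, rfl, rfl⟩
    rw [subAt_iff.mp hsub]; rfl

lemma seqAt_mono_step {s1 s2 : NSeq Pm × Set (List ℕ × MBForm Pm)} (h : SatStep s1 s2)
    {q Γ Δ} (hq : seqAt s1.1 q = some (Γ, Δ)) :
    ∃ Γ' Δ', seqAt s2.1 q = some (Γ', Δ') ∧ Γ ⊆ Γ' ∧ Δ ⊆ Δ' := by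
  rcases step_shape h with ⟨q0, Γ0, Δ0, Γn, Δn, h0, hΓ, hΔ, ht, -⟩ |
    ⟨p, α, hne, d, A, hs, ht, -⟩
  · rw [ht, seqAt_setSeq]
    by_cases hc : q = q0 ∧ ((s1.1.sub? q0).isSome : Prop)
    · rw [if_pos hc]
      obtain ⟨h1, -⟩ := hc
      subst h1
      rw [hq] at h0
      obtain ⟨h2, h3⟩ := Prod.mk.injEq .. ▸ (Option.some_inj.mp h0)
      exact ⟨Γn, Δn, rfl, h2 ▸ hΓ, h3 ▸ hΔ⟩
    · rw [if_neg hc]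
      exact ⟨Γ, Δ, hq, subset_rfl, subset_rfl⟩
  · rw [ht, seqAt_addChild _ _ _ _ _ _ hs]
    have hnode : ∃ Γp Δp tsp, s1.1.sub? p = some (.node Γp Δp tsp) := by
      cases hsp : s1.1.sub? p with
      | none => rw [hsp] at hs; simp at hs
      | some u => cases u with | node a b c => exact ⟨a, b, c, rfl⟩
    obtain ⟨Γp, Δp, tsp, hnode⟩ := hnode
    have hne2 : q ≠ p ++ [numKids s1.1 p] := by
      intro hc
      rw [hc, seqAt_new_none hnode] at hq
      exact nomatch hq
    rw [if_neg hne2]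
    exact ⟨Γ, Δ, hq, subset_rfl, subset_rfl⟩

lemma labelAt_mono_step {s1 s2 : NSeq Pm × Set (List ℕ × MBForm Pm)} (h : SatStep s1 s2)
    {q i lab} (hq : labelAt s1.1 q i = some lab) : labelAt s2.1 q i = some lab := by
  rcases step_shape h with ⟨q0, Γ0, Δ0, Γn, Δn, h0, hΓ, hΔ, ht, -⟩ |
    ⟨p, α, hne, d, A, hs, ht, -⟩
  · rw [ht, labelAt_setSeq]; exact hq
  · rw [ht, labelAt_addChild _ _ _ _ _ _ _ hs]
    have hnode : ∃ Γp Δp tsp, s1.1.sub? p = some (.node Γp Δp tsp) := by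
      cases hsp : s1.1.sub? p with
      | none => rw [hsp] at hs; simp at hs
      | some u => cases u with | node a b c => exact ⟨a, b, c, rfl⟩
    obtain ⟨Γp, Δp, tsp, hnode⟩ := hnode
    have hne2 : ¬ (q = p ∧ i = numKids s1.1 p) := by
      rintro ⟨rfl, rfl⟩
      rw [labelAt_new_none hnode] at hq
      exact nomatch hq
    rw [if_neg hne2]
    exact hq

lemma seqAt_mono_rtg {a b : NSeq Pm × Set (List ℕ × MBForm Pm)}
    (h : Relation.ReflTransGen SatStep a b) {q Γ Δ} (hq : seqAt a.1 q = some (Γ, Δ)) :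
    ∃ Γ' Δ', seqAt b.1 q = some (Γ', Δ') ∧ Γ ⊆ Γ' ∧ Δ ⊆ Δ' := by
  induction h with
  | refl => exact ⟨Γ, Δ, hq, subset_rfl, subset_rfl⟩
  | tail _ hbc ih =>
    obtain ⟨Γ', Δ', h1, h2, h3⟩ := ih
    obtain ⟨Γ'', Δ'', h4, h5, h6⟩ := seqAt_mono_step hbc h1
    exact ⟨Γ'', Δ'', h4, h2.trans h5, h3.trans h6⟩

/-- The invariant maintained for the set `D` of processed right boxes. -/
def InvD (s : NSeq Pm × Set (List ℕ × MBForm Pm)) : Prop :=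
  ∀ pb ∈ s.2, ∃ (p : List ℕ) (d : Side) (α : Pm.J) (A : MBForm Pm) (lab : MBLab Pm)
    (i : ℕ) (Γ' Δ' : Finset (MBForm Pm)),
    pb = (p, mkBox d α A) ∧ lab.α = (α:ℝ) ∧ lab.d = d ∧
    labelAt s.1 p i = some lab ∧ seqAt s.1 (p ++ [i]) = some (Γ', Δ') ∧ A ∈ Δ'

lemma invD_step {s1 s2 : NSeq Pm × Set (List ℕ × MBForm Pm)} (h : SatStep s1 s2)
    (hI : InvD s1) : InvD s2 := by
  intro pb hpb
  rcases step_shape h with ⟨q0, Γ0, Δ0, Γn, Δn, h0, hΓ, hΔ, ht, hD⟩ |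
    ⟨p0, α0, hne0, d0, A0, hs, ht, hD⟩
  · rw [hD] at hpb
    obtain ⟨p, d, α, A, lab, i, Γ', Δ', h1, h2, h3, h4, h5, h6⟩ := hI pb hpb
    refine ⟨p, d, α, A, lab, i, ?_⟩
    rw [ht, labelAt_setSeq]
    obtain ⟨Γ'', Δ'', h7, h8, h9⟩ := seqAt_mono_step h h5
    rw [ht] at h7
    exact ⟨Γ'', Δ'', h1, h2, h3, h4, h7, h9 h6⟩
  · rw [hD] at hpb
    have hnode : ∃ Γp Δp tsp, s1.1.sub? p0 = some (.node Γp Δp tsp) := by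
      cases hsp : s1.1.sub? p0 with
      | none => rw [hsp] at hs; simp at hs
      | some u => cases u with | node a b c => exact ⟨a, b, c, rfl⟩
    obtain ⟨Γp, Δp, tsp, hnode⟩ := hnode
    rcases Set.mem_insert_iff.mp hpb with hnew | hold
    · refine ⟨p0, d0, α0, A0, ⟨(α0:ℝ), α0.2, hne0, d0⟩, numKids s1.1 p0, ∅, {A0},
        hnew, rfl, rfl, ?_, ?_, Finset.mem_singleton_self A0⟩
      · rw [ht, labelAt_addChild _ _ _ _ _ _ _ hs, if_pos ⟨rfl, rfl⟩]
      · rw [ht, seqAt_addChild _ _ _ _ _ _ hs, if_pos rfl]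
    · obtain ⟨p, d, α, A, lab, i, Γ', Δ', h1, h2, h3, h4, h5, h6⟩ := hI pb hold
      obtain ⟨Γ'', Δ'', h7, h8, h9⟩ := seqAt_mono_step h h5
      exact ⟨p, d, α, A, lab, i, Γ'', Δ'', h1, h2, h3, labelAt_mono_step h h4, h7, h9 h6⟩

lemma invD_rtg {a b : NSeq Pm × Set (List ℕ × MBForm Pm)}
    (h : Relation.ReflTransGen SatStep a b) (ha : InvD a) : InvD b := by
  induction h with
  | refl => exact ha
  | tail _ hbc ih => exact invD_step hbc ih

variable {Pm : MBParams}

lemma get_of_labelAt {t : NSeq Pm} {p : List ℕ} {Γ Δ ts} {i : ℕ} {lab : MBLab Pm}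
    (h : t.sub? p = some (.node Γ Δ ts)) (hl : labelAt t p i = some lab) :
    ∃ u, ts.get i = some (lab, u) := by
  rw [labelAt_eq h] at hl
  cases hg : ts.get i with
  | none => rw [hg] at hl; exact nomatch hl
  | some x =>
    rw [hg] at hl
    simp only [Option.map_some, Option.some_inj] at hl
    exact ⟨x.2, by rw [← hl]⟩

section Closure
variable {t : NSeq Pm} {D : Set (List ℕ × MBForm Pm)}

lemma sub?_isSome_of_seqAt {p : List ℕ} {Γ Δ : Finset (MBForm Pm)}
    (h : seqAt t p = some (Γ, Δ)) : (t.sub? p).isSome := by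
  rw [← seqAt_isSome_iff, h]; rfl

lemma sat_setSeq_eq (hsat : Saturated (t, D)) {p : List ℕ} {Γ Δ Γn Δn : Finset (MBForm Pm)}
    (hq : seqAt t p = some (Γ, Δ))
    (hstep : SatStep (t, D) (t.setSeq p Γn Δn, D)) : Γn = Γ ∧ Δn = Δ := by
  have h1 : t.setSeq p Γn Δn = t := congrArg Prod.fst (hsat _ hstep)
  have h2 : seqAt (t.setSeq p Γn Δn) p = some (Γn, Δn) := by
    rw [seqAt_setSeq]; exact if_pos ⟨rfl, sub?_isSome_of_seqAt hq⟩
  rw [h1, hq] at h2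
  obtain ⟨h3, h4⟩ := Prod.mk.injEq .. ▸ Option.some_inj.mp h2.symm
  exact ⟨h3, h4⟩

variable (hsat : Saturated (t, D))
include hsat

lemma c_andL {p Γ Δ A B} (hq : seqAt t p = some (Γ, Δ)) (hm : MBForm.conj A B ∈ Γ) :
    A ∈ Γ ∧ B ∈ Γ := by
  obtain ⟨ts, hsub⟩ := subAt_of_seqAt hq
  have := (sat_setSeq_eq hsat hq (SatStep.andL hsub hm)).1
  constructor
  · rw [← this]; exact Finset.mem_insert_self _ _
  · rw [← this]; exact Finset.mem_insert_of_mem (Finset.mem_insert_self _ _)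

lemma c_negL {p Γ Δ A} (hq : seqAt t p = some (Γ, Δ)) (hm : MBForm.neg A ∈ Γ) : A ∈ Δ := by
  obtain ⟨ts, hsub⟩ := subAt_of_seqAt hq
  have := (sat_setSeq_eq hsat hq (SatStep.negL hsub hm)).2
  rw [← this]; exact Finset.mem_insert_self _ _

lemma c_negR {p Γ Δ A} (hq : seqAt t p = some (Γ, Δ)) (hm : MBForm.neg A ∈ Δ) : A ∈ Γ := by
  obtain ⟨ts, hsub⟩ := subAt_of_seqAt hq
  have := (sat_setSeq_eq hsat hq (SatStep.negR hsub hm)).1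
  rw [← this]; exact Finset.mem_insert_self _ _

lemma c_boxLself {p Γ Δ A} {α : Pm.J} {d : Side} (hq : seqAt t p = some (Γ, Δ))
    (hcond : ¬((α:ℝ) = 1 ∧ d = Side.o)) (hm : mkBox d α A ∈ Γ) : A ∈ Γ := by
  obtain ⟨ts, hsub⟩ := subAt_of_seqAt hq
  have := (sat_setSeq_eq hsat hq (SatStep.boxLself hsub hcond hm)).1
  rw [← this]; exact Finset.mem_insert_self _ _

lemma c_boxRself {p Γ Δ A} (hq : seqAt t p = some (Γ, Δ))
    (hm : MBForm.boxc ⟨1, Pm.one_mem⟩ A ∈ Δ) : A ∈ Δ := by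
  obtain ⟨ts, hsub⟩ := subAt_of_seqAt hq
  have := (sat_setSeq_eq hsat hq (SatStep.boxRself hsub hm)).2
  rw [← this]; exact Finset.mem_insert_self _ _

lemma c_boxC0 {p Γ Δ q Γq Δq A} (hq : seqAt t p = some (Γ, Δ))
    (hm : MBForm.boxc ⟨0, Pm.zero_mem⟩ A ∈ Γ)
    (hq2 : seqAt t q = some (Γq, Δq)) : A ∈ Γq := by
  obtain ⟨ts, hsub⟩ := subAt_of_seqAt hq
  obtain ⟨tsq, hsubq⟩ := subAt_of_seqAt hq2
  have := (sat_setSeq_eq hsat hq2 (SatStep.boxC0 hsub hm hsubq)).1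
  rw [← this]; exact Finset.mem_insert_self _ _

lemma c_boxL {p Γ Δ i Γ' Δ' A} {lab : MBLab Pm} {α : Pm.J} {d : Side}
    (hq : seqAt t p = some (Γ, Δ)) (hl : labelAt t p i = some lab)
    (hq' : seqAt t (p ++ [i]) = some (Γ', Δ'))
    (hpl : pleq (α:ℝ) d lab.α lab.d) (hm : mkBox d α A ∈ Γ) : A ∈ Γ' := by
  obtain ⟨ts, hsub⟩ := subAt_of_seqAt hq
  obtain ⟨u, hget⟩ := get_of_labelAt (subAt_iff.mp hsub) hl
  obtain ⟨ts', hsub'⟩ := subAt_of_seqAt hq'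
  have := (sat_setSeq_eq hsat hq' (SatStep.boxL hsub hget hsub' hpl hm)).1
  rw [← this]; exact Finset.mem_insert_self _ _

lemma c_boxLsym {p Γ Δ i Γ' Δ' A} {lab : MBLab Pm} {α : Pm.J} {d : Side}
    (hq : seqAt t p = some (Γ, Δ)) (hl : labelAt t p i = some lab)
    (hq' : seqAt t (p ++ [i]) = some (Γ', Δ'))
    (hpl : pleq (α:ℝ) d lab.α lab.d) (hm : mkBox d α A ∈ Γ') : A ∈ Γ := by
  obtain ⟨ts, hsub⟩ := subAt_of_seqAt hq
  obtain ⟨u, hget⟩ := get_of_labelAt (subAt_iff.mp hsub) hl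
  obtain ⟨ts', hsub'⟩ := subAt_of_seqAt hq'
  have := (sat_setSeq_eq hsat hq (SatStep.boxLsym hsub hget hsub' hpl hm)).1
  rw [← this]; exact Finset.mem_insert_self _ _

lemma c_boxR {p Γ Δ A} {α : Pm.J} {d : Side} (hne : (α:ℝ) ≠ 1)
    (hq : seqAt t p = some (Γ, Δ)) (hm : mkBox d α A ∈ Δ) :
    (p, mkBox d α A) ∈ D := by
  obtain ⟨ts, hsub⟩ := subAt_of_seqAt hq
  by_contra hd
  have h1 := hsat _ (SatStep.boxR hne hsub hm hd)
  have h2 : insert (p, mkBox d α A) D = D := congrArg Prod.snd h1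
  exact hd (h2 ▸ Set.mem_insert _ D)

lemma c_andR (hnp : ¬ Provable true t) {p Γ Δ A B} (hq : seqAt t p = some (Γ, Δ))
    (hm : MBForm.conj A B ∈ Δ) : A ∈ Δ ∨ B ∈ Δ := by
  obtain ⟨ts, hsub⟩ := subAt_of_seqAt hq
  by_contra hcon
  push_neg at hcon
  obtain ⟨hA, hB⟩ := hcon
  have hC : ∃ C, (C = A ∨ C = B) ∧ ¬ Provable true (t.setSeq p Γ (insert C Δ)) := by
    by_contra h'
    push_neg at h'
    have h2 := Provable.andR hsub (h' A (Or.inl rfl)) (h' B (Or.inr rfl))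
    rw [Finset.insert_eq_self.mpr hm, setSeq_self _ _ (subAt_iff.mp hsub)] at h2
    exact hnp h2
  obtain ⟨C, hC1, hC2⟩ := hC
  have := (sat_setSeq_eq hsat hq (SatStep.andR hsub hm hC1 hC2)).2
  have hCin : C ∈ Δ := by rw [← this]; exact Finset.mem_insert_self _ _
  rcases hC1 with rfl | rfl
  · exact hA hCin
  · exact hB hCin

end Closure

variable {Pm : MBParams}

/-! jset membership lemmas -/

lemma get_fst_mem_jsetTs : ∀ (i : ℕ) (ts : NSeqs Pm) (lab : MBLab Pm) (u : NSeq Pm),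
    ts.get i = some (lab, u) → lab.α ∈ NSeqs.jsetTs ts := by
  intro i
  induction i with
  | zero =>
    intro ts lab u h
    cases ts with
    | nil => exact nomatch h
    | cons l t ts =>
      simp only [NSeqs.get, Option.some_inj] at h
      cases h
      exact Set.mem_insert _ _
  | succ n ih =>
    intro ts lab u h
    cases ts with
    | nil => exact nomatch h
    | cons l t ts =>
      simp only [NSeqs.get] at h
      exact Set.mem_insert_of_mem _ (Set.mem_union_right _ (ih ts lab u h))

lemma get_jsetT_subset : ∀ (i : ℕ) (ts : NSeqs Pm) (x : MBLab Pm × NSeq Pm),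
    ts.get i = some x → x.2.jsetT ⊆ NSeqs.jsetTs ts := by
  intro i
  induction i with
  | zero =>
    intro ts x h
    cases ts with
    | nil => exact nomatch h
    | cons l t ts =>
      simp only [NSeqs.get, Option.some_inj] at h
      cases h
      exact fun y hy => Set.mem_insert_of_mem _ (Set.mem_union_left _ hy)
  | succ n ih =>
    intro ts x h
    cases ts with
    | nil => exact nomatch h
    | cons l t ts =>
      simp only [NSeqs.get] at h
      exact fun y hy => Set.mem_insert_of_mem _ (Set.mem_union_right _ (ih ts x h hy))

lemma jsetT_of_labelAt : ∀ (p : List ℕ) (t : NSeq Pm) (i : ℕ) (lab : MBLab Pm),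
    labelAt t p i = some lab → lab.α ∈ t.jsetT := by
  intro p
  induction p with
  | nil =>
    intro t i lab h
    cases t with
    | node Γ Δ ts =>
      rw [labelAt_nil] at h
      cases hg : ts.get i with
      | none => rw [hg] at h; exact nomatch h
      | some x =>
        rw [hg] at h
        simp only [Option.map_some, Option.some_inj] at h
        show lab.α ∈ _ ∪ NSeqs.jsetTs ts
        exact Set.mem_union_right _ (h ▸ get_fst_mem_jsetTs i ts x.1 x.2 (by rw [hg]))
  | cons j q ih =>
    intro t i lab h
    cases t with
    | node Γ Δ ts =>
      rw [labelAt_cons] at h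
      cases hg : ts.get j with
      | none => rw [hg] at h; exact nomatch h
      | some x =>
        rw [hg] at h
        simp only [Option.bind_some] at h
        have h2 := ih x.2 i lab h
        show lab.α ∈ _ ∪ NSeqs.jsetTs ts
        exact Set.mem_union_right _ (get_jsetT_subset j ts x hg h2)

lemma jsetF_of_mem : ∀ (p : List ℕ) (t : NSeq Pm) {Γ Δ ts} (A : MBForm Pm),
    t.sub? p = some (.node Γ Δ ts) → (A ∈ Γ ∨ A ∈ Δ) → A.jsetF ⊆ t.jsetT := by
  intro p
  induction p with
  | nil =>
    intro t Γ Δ ts A h hA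
    rw [sub?_nil] at h
    cases h
    show A.jsetF ⊆ ((⋃ B ∈ Γ, MBForm.jsetF B) ∪ (⋃ B ∈ Δ, MBForm.jsetF B)) ∪ _
    rcases hA with hA | hA
    · exact fun y hy => Set.mem_union_left _
        (Set.mem_union_left _ (Set.mem_biUnion hA hy))
    · exact fun y hy => Set.mem_union_left _
        (Set.mem_union_right _ (Set.mem_biUnion hA hy))
  | cons j q ih =>
    intro t Γ Δ ts A h hA
    cases t with
    | node Γ0 Δ0 ts0 =>
      rw [sub?_cons] at h
      cases hg : ts0.get j with
      | none => rw [hg] at h; exact nomatch h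
      | some x =>
        rw [hg] at h
        simp only [Option.bind_some] at h
        have h2 := ih x.2 A h hA
        show A.jsetF ⊆ _ ∪ NSeqs.jsetTs ts0
        exact fun y hy => Set.mem_union_right _ (get_jsetT_subset j ts0 x hg (h2 hy))

lemma jsetT_subset_jset (t : NSeq Pm) : t.jsetT ⊆ jset t :=
  fun y hy => Set.mem_insert_of_mem _ (Set.mem_insert_of_mem _ hy)

/-! Suc lemmas -/

section Suc
variable {U Js : Set ℝ} (hUfin : U.Finite)
include hUfin

lemma suc_gt {β : ℝ} (hβ : β < 1) : β < Suc U β := by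
  have hWne : (U ∩ Set.Ioi β ∪ {1}).Nonempty := ⟨1, Or.inr rfl⟩
  have hWfin : (U ∩ Set.Ioi β ∪ {1}).Finite :=
    (hUfin.inter_of_left _).union (Set.finite_singleton 1)
  have hmem := hWne.csInf_mem hWfin
  rcases hmem with h | h
  · exact h.2
  · rw [Set.mem_singleton_iff] at h
    rw [Suc, h]
    exact hβ

lemma suc_lt (hJsU : Js ⊆ U)
    (hint : ∀ α ∈ Js, ∀ β ∈ Js, α < β → (∀ γ ∈ Js, ¬ (α < γ ∧ γ < β)) →
      ∃! δ, δ ∈ U ∧ α < δ ∧ δ < β)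
    {α β : ℝ} (hJα : α ∈ Js) (hJβ : β ∈ Js) (h : β < α) : Suc U β < α := by
  have hJsfin : Js.Finite := hUfin.subset hJsU
  have hKne : (Js ∩ Set.Ioi β).Nonempty := ⟨α, hJα, h⟩
  have hKfin : (Js ∩ Set.Ioi β).Finite := hJsfin.inter_of_left _
  have hγmem := hKne.csInf_mem hKfin
  set γ := sInf (Js ∩ Set.Ioi β) with hγ
  have hγJs : γ ∈ Js := hγmem.1
  have hβγ : β < γ := hγmem.2
  have hγα : γ ≤ α := csInf_le hKfin.bddBelow ⟨hJα, h⟩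
  have hadj : ∀ δ ∈ Js, ¬ (β < δ ∧ δ < γ) := by
    rintro δ hδ ⟨h1, h2⟩
    exact absurd (csInf_le hKfin.bddBelow ⟨hδ, h1⟩) (not_le.mpr h2)
  obtain ⟨δ0, ⟨hδ0U, hδ1, hδ2⟩, -⟩ := hint β hJβ γ hγJs hβγ hadj
  have hWfin : (U ∩ Set.Ioi β ∪ {1}).Finite :=
    (hUfin.inter_of_left _).union (Set.finite_singleton 1)
  have hle : Suc U β ≤ δ0 := csInf_le hWfin.bddBelow (Or.inl ⟨hδ0U, hδ1⟩)
  exact lt_of_le_of_lt hle (lt_of_lt_of_le hδ2 hγα)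

lemma le_of_le_suc (hJsU : Js ⊆ U)
    (hint : ∀ α ∈ Js, ∀ β ∈ Js, α < β → (∀ γ ∈ Js, ¬ (α < γ ∧ γ < β)) →
      ∃! δ, δ ∈ U ∧ α < δ ∧ δ < β)
    {α β : ℝ} (hJα : α ∈ Js) (hJβ : β ∈ Js) (h : α ≤ Suc U β) : α ≤ β := by
  by_contra hc
  push_neg at hc
  exact absurd h (not_le.mpr (suc_lt hUfin hJsU hint hJα hJβ hc))

end Suc

/-! lval / RC lemmas -/

lemma lval_concat (t : NSeq Pm) (U : Set ℝ) {p : List ℕ} {i : ℕ} {lab : MBLab Pm}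
    (hl : labelAt t p i = some lab) :
    lval t U p (p ++ [i]) = (match lab.d with | Side.c => lab.α | Side.o => Suc U lab.α) := by
  simp only [lval, List.getLast?_concat, List.dropLast_concat, if_pos, hl]
  try split <;> rename_i heq <;> rw [heq]

lemma lval_rev_zero (t : NSeq Pm) (U : Set ℝ) (p : List ℕ) (i : ℕ) :
    lval t U (p ++ [i]) p = 0 := by
  cases hg : p.getLast? with
  | none => simp [lval, hg]
  | some j =>
    have hne : p.dropLast ≠ p ++ [i] := by
      intro h
      have := congrArg List.length h
      simp only [List.length_dropLast, List.length_append, List.length_singleton] at this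
      omega
    simp [lval, hg, hne]

lemma lval_ne_zero {t : NSeq Pm} {U : Set ℝ} {p q : List ℕ} (h : lval t U p q ≠ 0) :
    ∃ i lab, q = p ++ [i] ∧ labelAt t p i = some lab ∧
      lval t U p q = (match lab.d with | Side.c => lab.α | Side.o => Suc U lab.α) := by
  cases hg : q.getLast? with
  | none => exfalso; apply h; simp [lval, hg]
  | some i =>
    by_cases hd : q.dropLast = p
    · obtain ⟨l', rfl⟩ := List.getLast?_eq_some_iff.mp hg
      rw [List.dropLast_concat] at hd
      subst hd
      cases hlab : labelAt t l' i with
      | none =>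
        exfalso; apply h
        simp [lval, List.getLast?_concat, List.dropLast_concat, hlab]
      | some lab =>
        refine ⟨i, lab, rfl, hlab, ?_⟩
        simp only [lval, List.getLast?_concat, List.dropLast_concat, if_pos, hlab]
        try split <;> rename_i heq <;> rw [heq]
    · exfalso; apply h; simp [lval, hg, hd]

lemma RC_self (t : NSeq Pm) (U : Set ℝ) (p : List ℕ) : RC t U p p = 1 := if_pos rfl

lemma RC_ne (t : NSeq Pm) (U : Set ℝ) {p q : List ℕ} (h : p ≠ q) :
    RC t U p q = max (lval t U p q) (lval t U q p) := if_neg h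

lemma RC_child (t : NSeq Pm) (U : Set ℝ) {p : List ℕ} {i : ℕ} {lab : MBLab Pm}
    (hl : labelAt t p i = some lab) :
    RC t U p (p ++ [i]) =
      max (match lab.d with | Side.c => lab.α | Side.o => Suc U lab.α) 0 := by
  rw [RC_ne t U (by simp), lval_concat t U hl, lval_rev_zero]

variable {Pm : MBParams}

lemma pleq_cc {a b : ℝ} (h : a ≤ b) : pleq a Side.c b Side.c := h
lemma pleq_co {a b : ℝ} (h : a ≤ b) : pleq a Side.c b Side.o := h
lemma pleq_oc {a b : ℝ} (h : a < b) : pleq a Side.o b Side.c := h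
lemma pleq_oo {a b : ℝ} (h : a ≤ b) : pleq a Side.o b Side.o := h

lemma mkBox_inj {d d' : Side} {α α' : Pm.J} {A A' : MBForm Pm}
    (h : mkBox d α A = mkBox d' α' A') : d = d' ∧ α = α' ∧ A = A' := by
  cases d <;> cases d' <;> simp only [mkBox] at h <;> try (simp at h; done)
  · obtain ⟨h1, h2⟩ := MBForm.boxc.inj h
    exact ⟨rfl, h1, h2⟩
  · obtain ⟨h1, h2⟩ := MBForm.boxo.inj h
    exact ⟨rfl, h1, h2⟩

lemma truth_lemma {t : NSeq Pm} {D : Set (List ℕ × MBForm Pm)}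
    (hsat : Saturated (t, D)) (hnp : ¬ Provable true t) (hD : InvD (t, D))
    {U : Set ℝ} (hU : Interpolated (jset t) U) :
    ∀ (A : MBForm Pm) (p : List ℕ) (Γ Δ : Finset (MBForm Pm)) (ts : NSeqs Pm),
      t.sub? p = some (.node Γ Δ ts) → ∀ (hw : IsNode t p),
      (A ∈ Γ → (⟨p, hw⟩ : World t) ∈ MBForm.valR (RCW t U) (VC t) A) ∧
      (A ∈ Δ → (⟨p, hw⟩ : World t) ∉ MBForm.valR (RCW t U) (VC t) A) := by
  obtain ⟨hUfin, hU01, hJsU, hint⟩ := hU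
  -- facts about numbers occurring in `t`
  have hJlab : ∀ {p i} {lab : MBLab Pm}, labelAt t p i = some lab → lab.α ∈ jset t :=
    fun h => jsetT_subset_jset t (jsetT_of_labelAt _ t _ _ h)
  have hJboxc : ∀ {p Γ Δ ts} {α : Pm.J} {A : MBForm Pm},
      t.sub? p = some (.node Γ Δ ts) → (MBForm.boxc α A ∈ Γ ∨ MBForm.boxc α A ∈ Δ) →
      (α:ℝ) ∈ jset t := by
    intro p Γ Δ ts α A hp hm
    exact jsetT_subset_jset t (jsetF_of_mem p t _ hp hm (Set.mem_insert _ _))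
  have hJboxo : ∀ {p Γ Δ ts} {α : Pm.J} {A : MBForm Pm},
      t.sub? p = some (.node Γ Δ ts) → (MBForm.boxo α A ∈ Γ ∨ MBForm.boxo α A ∈ Δ) →
      (α:ℝ) ∈ jset t := by
    intro p Γ Δ ts α A hp hm
    exact jsetT_subset_jset t (jsetF_of_mem p t _ hp hm (Set.mem_insert _ _))
  intro A
  induction A with
  | var n =>
    intro p Γ Δ ts hp hw
    constructor
    · intro h
      exact ⟨Γ, Δ, ts, subAt_iff.mpr hp, h⟩
    · intro h hmem
      obtain ⟨Γ2, Δ2, ts2, hsub2, hvar⟩ := hmem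
      have he := subAt_unique hsub2 (subAt_iff.mpr hp)
      injection he with e1 e2 e3
      exact hnp (Provable.axId (subAt_iff.mpr hp) (e1 ▸ hvar) h)
  | top =>
    intro p Γ Δ ts hp hw
    exact ⟨fun _ => Set.mem_univ _, fun h _ => hnp (Provable.axTop (subAt_iff.mpr hp) h)⟩
  | bot =>
    intro p Γ Δ ts hp hw
    exact ⟨fun h => absurd (Provable.axBot (subAt_iff.mpr hp) h) hnp, fun _ h => h⟩
  | neg A ih =>
    intro p Γ Δ ts hp hw
    have hseq : seqAt t p = some (Γ, Δ) := seqAt_eq_some_iff.mpr ⟨ts, hp⟩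
    constructor
    · intro h
      exact (ih p Γ Δ ts hp hw).2 (c_negL hsat hseq h)
    · intro h hmem
      exact hmem ((ih p Γ Δ ts hp hw).1 (c_negR hsat hseq h))
  | conj A B ihA ihB =>
    intro p Γ Δ ts hp hw
    have hseq : seqAt t p = some (Γ, Δ) := seqAt_eq_some_iff.mpr ⟨ts, hp⟩
    constructor
    · intro h
      obtain ⟨h1, h2⟩ := c_andL hsat hseq h
      exact ⟨(ihA p Γ Δ ts hp hw).1 h1, (ihB p Γ Δ ts hp hw).1 h2⟩
    · intro h hmem
      rcases c_andR hsat hnp hseq h with h1 | h1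
      · exact (ihA p Γ Δ ts hp hw).2 h1 hmem.1
      · exact (ihB p Γ Δ ts hp hw).2 h1 hmem.2
  | boxc α A ih =>
    intro p Γ Δ ts hp hw
    have hseq : seqAt t p = some (Γ, Δ) := seqAt_eq_some_iff.mpr ⟨ts, hp⟩
    have hα01 : (α:ℝ) ∈ Set.Icc (0:ℝ) 1 := Pm.subI α.2
    constructor
    · -- `□^c_α A` on the left
      intro h
      have hJ : (α:ℝ) ∈ jset t := hJboxc hp (Or.inl h)
      have hm : mkBox Side.c α A ∈ Γ := h
      simp only [MBForm.valR, Set.mem_setOf_eq]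
      rintro ⟨q, hq⟩ hle
      obtain ⟨uq, hsubq⟩ := id hq
      rcases uq with ⟨Γq, Δq, tsq⟩
      have hq2 : t.sub? q = some (.node Γq Δq tsq) := subAt_iff.mp hsubq
      have hqseq : seqAt t q = some (Γq, Δq) := seqAt_eq_some_iff.mpr ⟨tsq, hq2⟩
      apply (ih q Γq Δq tsq hq2 hq).1
      by_cases hpq : p = q
      · subst hpq
        have he := subAt_unique hsubq (subAt_iff.mpr hp)
        injection he with e1 e2 e3
        subst e1
        exact c_boxLself hsat hseq (by simp) hm
      · have hRC : (α:ℝ) ≤ max (lval t U p q) (lval t U q p) := by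
          have : RCW t U ⟨p, hw⟩ ⟨q, hq⟩ = RC t U p q := rfl
          rw [this, RC_ne t U hpq] at hle
          exact hle
        by_cases hα0 : (α:ℝ) = 0
        · have hzero : α = ⟨0, Pm.zero_mem⟩ := Subtype.ext hα0
          exact c_boxC0 hsat hseq (hzero ▸ h) hqseq
        · have hαpos : (0:ℝ) < α := lt_of_le_of_ne hα01.1 (Ne.symm hα0)
          rcases le_max_iff.mp hRC with h1 | h1
          · obtain ⟨i, lab, rfl, hlab, hveq⟩ :=
              lval_ne_zero (p := p) (q := q) (ne_of_gt (lt_of_lt_of_le hαpos h1))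
            rw [hveq] at h1
            have hpleq : pleq (α:ℝ) Side.c lab.α lab.d := by
              cases hld : lab.d with
              | c => rw [hld] at h1; exact pleq_cc h1
              | o =>
                rw [hld] at h1
                exact pleq_co (le_of_le_suc hUfin hJsU hint hJ (hJlab hlab) h1)
            exact c_boxL hsat hseq hlab hqseq hpleq hm
          · obtain ⟨j, lab, rfl, hlab, hveq⟩ :=
              lval_ne_zero (p := q) (q := p) (ne_of_gt (lt_of_lt_of_le hαpos h1))
            rw [hveq] at h1
            have hpleq : pleq (α:ℝ) Side.c lab.α lab.d := by
              cases hld : lab.d with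
              | c => rw [hld] at h1; exact pleq_cc h1
              | o =>
                rw [hld] at h1
                exact pleq_co (le_of_le_suc hUfin hJsU hint hJ (hJlab hlab) h1)
            exact c_boxLsym hsat hqseq hlab hseq hpleq hm
    · -- `□^c_α A` on the right
      intro h hmem
      simp only [MBForm.valR, Set.mem_setOf_eq] at hmem
      by_cases h1 : (α:ℝ) = 1
      · have hone : α = ⟨1, Pm.one_mem⟩ := Subtype.ext h1
        have hAΔ : A ∈ Δ := c_boxRself hsat hseq (hone ▸ h)
        have hle : (α:ℝ) ≤ RCW t U ⟨p, hw⟩ ⟨p, hw⟩ := by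
          show (α:ℝ) ≤ RC t U p p
          rw [RC_self]; exact hα01.2
        exact (ih p Γ Δ ts hp hw).2 hAΔ (hmem ⟨p, hw⟩ hle)
      · have hmemD := c_boxR hsat h1 hseq (show mkBox Side.c α A ∈ Δ from h)
        obtain ⟨p', d', α', A', lab, i, Γ', Δ', heq, hlabα, hlabd, hlab, hseq', hA⟩ :=
          hD _ hmemD
        obtain ⟨hpp, hbox⟩ := Prod.mk.injEq .. ▸ heq
        obtain ⟨hd, hα, hA'⟩ := mkBox_inj hbox.symm
        subst hpp; subst hd
        rw [hα] at hlabα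
        rw [hA'] at hA
        obtain ⟨ts', hsub'⟩ := seqAt_eq_some_iff.mp hseq'
        have hnode : IsNode t (p ++ [i]) := ⟨_, subAt_iff.mpr hsub'⟩
        have hle : (α:ℝ) ≤ RCW t U ⟨p, hw⟩ ⟨p ++ [i], hnode⟩ := by
          show (α:ℝ) ≤ RC t U p (p ++ [i])
          rw [RC_child t U hlab, hlabd]
          exact le_trans (le_of_eq hlabα.symm) (le_max_left lab.α 0)
        exact (ih (p ++ [i]) Γ' Δ' ts' hsub' hnode).2 hA (hmem ⟨p ++ [i], hnode⟩ hle)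
  | boxo α A ih =>
    intro p Γ Δ ts hp hw
    have hseq : seqAt t p = some (Γ, Δ) := seqAt_eq_some_iff.mpr ⟨ts, hp⟩
    have hα01 : (α:ℝ) ∈ Set.Icc (0:ℝ) 1 := Pm.subI α.2
    constructor
    · -- `□^o_α A` on the left
      intro h
      have hJ : (α:ℝ) ∈ jset t := hJboxo hp (Or.inl h)
      have hm : mkBox Side.o α A ∈ Γ := h
      simp only [MBForm.valR, Set.mem_setOf_eq]
      rintro ⟨q, hq⟩ hlt
      obtain ⟨uq, hsubq⟩ := id hq
      rcases uq with ⟨Γq, Δq, tsq⟩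
      have hq2 : t.sub? q = some (.node Γq Δq tsq) := subAt_iff.mp hsubq
      have hqseq : seqAt t q = some (Γq, Δq) := seqAt_eq_some_iff.mpr ⟨tsq, hq2⟩
      apply (ih q Γq Δq tsq hq2 hq).1
      by_cases hpq : p = q
      · subst hpq
        have he := subAt_unique hsubq (subAt_iff.mpr hp)
        injection he with e1 e2 e3
        subst e1
        have hne1 : (α:ℝ) ≠ 1 := by
          intro hc
          have : RCW t U ⟨p, hw⟩ ⟨p, hq⟩ = RC t U p p := rfl
          rw [this, RC_self, hc] at hlt
          exact lt_irrefl _ hlt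
        exact c_boxLself hsat hseq (by simp [hne1]) hm
      · have hRC : (α:ℝ) < max (lval t U p q) (lval t U q p) := by
          have : RCW t U ⟨p, hw⟩ ⟨q, hq⟩ = RC t U p q := rfl
          rw [this, RC_ne t U hpq] at hlt
          exact hlt
        rcases lt_max_iff.mp hRC with h1 | h1
        · obtain ⟨i, lab, rfl, hlab, hveq⟩ :=
            lval_ne_zero (p := p) (q := q)
              (ne_of_gt (lt_of_le_of_lt hα01.1 h1))
          rw [hveq] at h1
          have hpleq : pleq (α:ℝ) Side.o lab.α lab.d := by
            cases hld : lab.d with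
            | c => rw [hld] at h1; exact pleq_oc h1
            | o =>
              rw [hld] at h1
              exact pleq_oo (le_of_le_suc hUfin hJsU hint hJ (hJlab hlab) (le_of_lt h1))
          exact c_boxL hsat hseq hlab hqseq hpleq hm
        · obtain ⟨j, lab, rfl, hlab, hveq⟩ :=
            lval_ne_zero (p := q) (q := p)
              (ne_of_gt (lt_of_le_of_lt hα01.1 h1))
          rw [hveq] at h1
          have hpleq : pleq (α:ℝ) Side.o lab.α lab.d := by
            cases hld : lab.d with
            | c => rw [hld] at h1; exact pleq_oc h1
            | o =>
              rw [hld] at h1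
              exact pleq_oo (le_of_le_suc hUfin hJsU hint hJ (hJlab hlab) (le_of_lt h1))
          exact c_boxLsym hsat hqseq hlab hseq hpleq hm
    · -- `□^o_α A` on the right
      intro h hmem
      simp only [MBForm.valR, Set.mem_setOf_eq] at hmem
      by_cases h1 : (α:ℝ) = 1
      · have hone : α = ⟨1, Pm.one_mem⟩ := Subtype.ext h1
        exact hnp (Provable.axBoxO1 (subAt_iff.mpr hp) (hone ▸ h))
      · have hmemD := c_boxR hsat h1 hseq (show mkBox Side.o α A ∈ Δ from h)
        obtain ⟨p', d', α', A', lab, i, Γ', Δ', heq, hlabα, hlabd, hlab, hseq', hA⟩ :=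
          hD _ hmemD
        obtain ⟨hpp, hbox⟩ := Prod.mk.injEq .. ▸ heq
        obtain ⟨hd, hα, hA'⟩ := mkBox_inj hbox.symm
        subst hpp; subst hd
        rw [hα] at hlabα
        rw [hA'] at hA
        obtain ⟨ts', hsub'⟩ := seqAt_eq_some_iff.mp hseq'
        have hnode : IsNode t (p ++ [i]) := ⟨_, subAt_iff.mpr hsub'⟩
        have hlt : (α:ℝ) < RCW t U ⟨p, hw⟩ ⟨p ++ [i], hnode⟩ := by
          show (α:ℝ) < RC t U p (p ++ [i])
          rw [RC_child t U hlab, hlabd]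
          have hs : (α:ℝ) < Suc U lab.α := by
            rw [hlabα]
            exact suc_gt hUfin (lt_of_le_of_ne hα01.2 h1)
          exact lt_max_iff.mpr (Or.inl hs)
        exact (ih (p ++ [i]) Γ' Δ' ts' hsub' hnode).2 hA (hmem ⟨p ++ [i], hnode⟩ hlt)

end Auxiliary

/-- If a nested-sequent is not provable in NSMB, then it is
false in the canonical model under the canonical embedding `E_C` (which sends
each node to the node of the saturation at the same address). -/
theorem falsified_in_canonical_model {Pm : MBParams} (t0 : NSeq Pm)
    (h0 : ¬ Provable true t0) (s : NSeq Pm × Set (List ℕ × MBForm Pm))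
    (hre : Relation.ReflTransGen SatStep (t0, (∅ : Set (List ℕ × MBForm Pm))) s)
    (hsat : Saturated s) (U : Set ℝ) (hU : Interpolated (jset s.1) U) :
    ∀ p Γ Δ ts, SubAt t0 p (.node Γ Δ ts) →
      ∃ hp : IsNode s.1 p,
        (∀ A ∈ Γ, (⟨p, hp⟩ : World s.1) ∈ MBForm.valR (RCW s.1 U) (VC s.1) A) ∧
        (∀ A ∈ Δ, (⟨p, hp⟩ : World s.1) ∉ MBForm.valR (RCW s.1 U) (VC s.1) A) := by
  obtain ⟨tC, DC⟩ := s
  intro p Γ Δ ts hsub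
  have hseq0 : seqAt t0 p = some (Γ, Δ) := seqAt_of_subAt hsub
  obtain ⟨Γ', Δ', hseq, hΓ, hΔ⟩ := seqAt_mono_rtg hre hseq0
  obtain ⟨ts', hsub'⟩ := seqAt_eq_some_iff.mp hseq
  have hw : IsNode tC p := ⟨_, subAt_iff.mpr hsub'⟩
  have hnp : ¬ Provable true tC := unprov_rtg hre h0
  have hD : InvD (tC, DC) :=
    invD_rtg hre (fun pb hpb => absurd hpb (Set.notMem_empty pb))
  have TL := truth_lemma hsat hnp hD hU
  refine ⟨hw, ?_, ?_⟩
  · intro A hA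
    exact (TL A p Γ' Δ' ts' hsub' hw).1 (hΓ hA)
  · intro A hA
    exact (TL A p Γ' Δ' ts' hsub' hw).2 (hΔ hA)


end MBQL
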